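/- With Φ and Ψ as above (Ψ(s) = Φ'(t) for s = 1/(Φ(t)Φ'(t))), the integral ∫_0 ds/(s·Ψ(s)) converges near 0. Specifically, under the change of variables s = 1/(Φ(t)Φ'(t)), the integral ∫_0 ds/(sΨ(s)) equals ∫^{+∞} (1/Φ(t) + Φ''(t)/Φ'(t)²) dt, which is finite when ∫^{+∞} dt/Φ(t) < ∞. -/

import Mathlib

open Set MeasureTheory

/-- With Φ a twice-differentiable Young function with
∫^∞ dt/Φ(t) < ∞ and Ψ defined by Ψ(s) = Φ'(t) for s = σ(t) = 1/(Φ(t)Φ'(t)),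
the integral ∫_0 ds/(s·Ψ(s)) converges near 0 and, under the change of
variables s = σ(t), equals ∫_{t₀}^∞ (1/Φ(t) + Φ''(t)/Φ'(t)²) dt, which is
finite. -/
theorem stmt1
    (Φ Φ' Φ'' Ψ : ℝ → ℝ)
    (hΦcont : ContinuousOn Φ (Ici 0))
    (hΦnonneg : ∀ t ∈ Ici (0:ℝ), 0 ≤ Φ t)
    (hΦmono : MonotoneOn Φ (Ici 0))
    (hΦconv : ConvexOn ℝ (Ici 0) Φ)
    (hΦ0 : Φ 0 = 0)
    (hΦderiv : ∀ t ∈ Ioi (0:ℝ), HasDerivAt Φ (Φ' t) t)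
    (hΦ'deriv : ∀ t ∈ Ioi (0:ℝ), HasDerivAt Φ' (Φ'' t) t)
    (hΦ'pos : ∀ t ∈ Ioi (0:ℝ), 0 < Φ' t)
    (hΦ'mono : MonotoneOn Φ' (Ioi 0))
    (hΦint : IntegrableOn (fun t => 1 / Φ t) (Ioi 1))
    (σ : ℝ → ℝ) (hσ : ∀ t ∈ Ioi (0:ℝ), σ t = 1 / (Φ t * Φ' t))
    (hΨ : ∀ t ∈ Ioi (0:ℝ), Ψ (σ t) = Φ' t)
    (t₀ : ℝ) (ht₀ : 0 < t₀) :
    IntegrableOn (fun s => 1 / (s * Ψ s)) (σ '' Ioi t₀) ∧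
    (∫ s in σ '' Ioi t₀, 1 / (s * Ψ s)) =
      ∫ t in Ioi t₀, (1 / Φ t + Φ'' t / (Φ' t) ^ 2) ∧
    IntegrableOn (fun t => 1 / Φ t + Φ'' t / (Φ' t) ^ 2) (Ioi t₀) := by
  -- Φ is strictly monotone on Ici 0, hence positive on Ioi 0
  have hΦsm : StrictMonoOn Φ (Ici 0) := by
    apply strictMonoOn_of_deriv_pos (convex_Ici 0) hΦcont
    intro x hx
    rw [interior_Ici] at hx
    rw [(hΦderiv x hx).deriv]
    exact hΦ'pos x hx
  have hΦpos : ∀ t ∈ Ioi (0:ℝ), 0 < Φ t := by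
    intro t ht
    have := hΦsm self_mem_Ici (mem_Ici.mpr (le_of_lt ht)) ht
    rwa [hΦ0] at this
  -- Φ'' is nonneg on Ioi 0
  have hΦ''nonneg : ∀ t ∈ Ioi (0:ℝ), 0 ≤ Φ'' t := by
    intro t ht
    have hd : HasDerivWithinAt Φ' (Φ'' t) (Ioi t) t :=
      (hΦ'deriv t ht).hasDerivWithinAt
    rw [hasDerivWithinAt_iff_tendsto_slope,
      diff_singleton_eq_self notMem_Ioi_self] at hd
    refine ge_of_tendsto hd ?_
    filter_upwards [self_mem_nhdsWithin] with u hu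
    have htu : t < u := hu
    have hu0 : u ∈ Ioi (0:ℝ) := lt_trans ht htu
    have : Φ' t ≤ Φ' u := hΦ'mono ht hu0 (le_of_lt htu)
    rw [slope_def_field]
    have hden : 0 < u - t := by linarith
    exact div_nonneg (by linarith) hden.le
  -- the derivative of σ
  set σ' : ℝ → ℝ := fun t => -((Φ' t * Φ' t + Φ t * Φ'' t) / (Φ t * Φ' t) ^ 2) with hσ'def
  have hprod_ne : ∀ t ∈ Ioi (0:ℝ), Φ t * Φ' t ≠ 0 := fun t ht =>
    (mul_pos (hΦpos t ht) (hΦ'pos t ht)).ne'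
  have hσd : ∀ t ∈ Ioi (0:ℝ), HasDerivAt σ (σ' t) t := by
    intro t ht
    have h1 : HasDerivAt (fun u => Φ u * Φ' u)
        (Φ' t * Φ' t + Φ t * Φ'' t) t := (hΦderiv t ht).mul (hΦ'deriv t ht)
    have h2 : HasDerivAt (fun u => (Φ u * Φ' u)⁻¹)
        (-(Φ' t * Φ' t + Φ t * Φ'' t) / (Φ t * Φ' t) ^ 2) t :=
      h1.inv (hprod_ne t ht)
    have heq : σ =ᶠ[nhds t] fun u => (Φ u * Φ' u)⁻¹ := by
      filter_upwards [IsOpen.mem_nhds isOpen_Ioi ht] with u hu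
      rw [hσ u hu, one_div]
    have h3 : HasDerivAt σ (-(Φ' t * Φ' t + Φ t * Φ'' t) / (Φ t * Φ' t) ^ 2) t :=
      h2.congr_of_eventuallyEq heq
    have : σ' t = -(Φ' t * Φ' t + Φ t * Φ'' t) / (Φ t * Φ' t) ^ 2 := by
      rw [hσ'def]; ring
    rw [this]; exact h3
  have hsub : Ioi t₀ ⊆ Ioi (0:ℝ) := Ioi_subset_Ioi ht₀.le
  have hσdW : ∀ t ∈ Ioi t₀, HasDerivWithinAt σ (σ' t) (Ioi t₀) t :=
    fun t ht => (hσd t (hsub ht)).hasDerivWithinAt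
  -- injectivity of σ on Ioi t₀
  have hinj : InjOn σ (Ioi t₀) := by
    have hanti : StrictAntiOn σ (Ioi t₀) := by
      intro a ha b hb hab
      have ha0 : a ∈ Ioi (0:ℝ) := hsub ha
      have hb0 : b ∈ Ioi (0:ℝ) := hsub hb
      rw [hσ a ha0, hσ b hb0]
      have h1 : Φ a * Φ' a < Φ b * Φ' b := by
        have hΦab : Φ a < Φ b := hΦsm (mem_Ici.mpr (le_of_lt ha0)) (mem_Ici.mpr (le_of_lt hb0)) hab
        have hΦ'ab : Φ' a ≤ Φ' b := hΦ'mono ha0 hb0 hab.le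
        calc Φ a * Φ' a < Φ b * Φ' a := by
              exact mul_lt_mul_of_pos_right hΦab (hΦ'pos a ha0)
          _ ≤ Φ b * Φ' b := by
              exact mul_le_mul_of_nonneg_left hΦ'ab (hΦpos b hb0).le
      exact one_div_lt_one_div_of_lt (mul_pos (hΦpos a ha0) (hΦ'pos a ha0)) h1
    exact hanti.injOn
  -- pointwise identity of the integrands
  have key : ∀ t ∈ Ioi t₀,
      |σ' t| • (1 / (σ t * Ψ (σ t))) = 1 / Φ t + Φ'' t / Φ' t ^ 2 := by
    intro t ht
    have ht0 : t ∈ Ioi (0:ℝ) := hsub ht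
    have hΦt : 0 < Φ t := hΦpos t ht0
    have hΦ't : 0 < Φ' t := hΦ'pos t ht0
    have hΦ''t : 0 ≤ Φ'' t := hΦ''nonneg t ht0
    rw [hΨ t ht0, hσ t ht0]
    have habs : |σ' t| = (Φ' t * Φ' t + Φ t * Φ'' t) / (Φ t * Φ' t) ^ 2 := by
      rw [hσ'def, abs_neg, abs_of_nonneg]
      positivity
    rw [habs, smul_eq_mul]
    field_simp
  -- integrability of the target
  have hint : IntegrableOn (fun t => 1 / Φ t + Φ'' t / Φ' t ^ 2) (Ioi t₀) := by
    apply Integrable.add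
    · -- 1/Φ
      have hM : IntegrableOn (fun t => 1 / Φ t) (Ioi (max 1 t₀)) :=
        hΦint.mono_set (Ioi_subset_Ioi (le_max_left _ _))
      have hcIcc : ContinuousOn (fun t => 1 / Φ t) (Icc t₀ (max 1 t₀)) := by
        intro x hx
        have hx0 : (0:ℝ) < x := lt_of_lt_of_le ht₀ hx.1
        exact (continuousWithinAt_const.div
          ((hΦcont x (le_of_lt hx0)).mono (fun y hy => le_trans ht₀.le hy.1))
          (hΦpos x hx0).ne')
      have hc : IntegrableOn (fun t => 1 / Φ t) (Ioc t₀ (max 1 t₀)) :=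
        hcIcc.integrableOn_Icc.mono_set Ioc_subset_Icc_self
      have : IntegrableOn (fun t => 1 / Φ t) (Ioc t₀ (max 1 t₀) ∪ Ioi (max 1 t₀)) :=
        hc.union hM
      apply this.mono_set
      rw [Ioc_union_Ioi_eq_Ioi (le_max_right 1 t₀)]
    · -- Φ''/Φ'^2 = derivative of -1/Φ'
      have hg : ∀ x ∈ Ioi t₀, HasDerivAt (fun u => -(Φ' u)⁻¹) (Φ'' x / Φ' x ^ 2) x := by
        intro x hx
        have hx0 : x ∈ Ioi (0:ℝ) := hsub hx
        have := ((hΦ'deriv x hx0).inv (hΦ'pos x hx0).ne').neg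
        rw [show Φ'' x / Φ' x ^ 2 = -(-Φ'' x / Φ' x ^ 2) by ring]
        exact this
      -- -1/Φ' tends to a limit at +∞ since it is monotone and bounded above by 0
      set g : ℝ → ℝ := fun u => -(Φ' (max u (t₀ + 1)))⁻¹ with hgdef
      have hgmono : Monotone g := by
        intro a b hab
        have ha : (0:ℝ) < max a (t₀ + 1) := lt_of_lt_of_le (by linarith) (le_max_right _ _)
        have hb : (0:ℝ) < max b (t₀ + 1) := lt_of_lt_of_le (by linarith) (le_max_right _ _)
        have h1 : Φ' (max a (t₀ + 1)) ≤ Φ' (max b (t₀ + 1)) :=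
          hΦ'mono ha hb (max_le_max hab le_rfl)
        have h2 : 0 < Φ' (max a (t₀ + 1)) := hΦ'pos _ ha
        simp only [hgdef, neg_le_neg_iff]
        exact inv_anti₀ h2 h1
      have hgbdd : BddAbove (range g) := by
        refine ⟨0, ?_⟩
        rintro y ⟨x, rfl⟩
        have hx : (0:ℝ) < max x (t₀ + 1) := lt_of_lt_of_le (by linarith) (le_max_right _ _)
        simp only [hgdef]
        have := hΦ'pos _ hx
        simp only [neg_nonpos]
        positivity
      have hgt : Filter.Tendsto g Filter.atTop (nhds (⨆ i, g i)) :=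
        tendsto_atTop_ciSup hgmono hgbdd
      have hgeq : (fun u => -(Φ' u)⁻¹) =ᶠ[Filter.atTop] g := by
        filter_upwards [Filter.eventually_ge_atTop (t₀ + 1)] with u hu
        simp only [hgdef, max_eq_left hu]
      have htend : Filter.Tendsto (fun u => -(Φ' u)⁻¹) Filter.atTop (nhds (⨆ i, g i)) :=
        hgt.congr' hgeq.symm
      have hcont : ContinuousWithinAt (fun u => -(Φ' u)⁻¹) (Ici t₀) t₀ :=
        ((hΦ'deriv t₀ ht₀).continuousAt.inv₀ (hΦ'pos t₀ ht₀).ne').neg.continuousWithinAt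
      exact integrableOn_Ioi_deriv_of_nonneg hcont hg
        (fun x hx => by
          have hx0 : x ∈ Ioi (0:ℝ) := hsub hx
          have := hΦ''nonneg x hx0
          have := hΦ'pos x hx0
          positivity) htend
  refine ⟨?_, ?_, hint⟩
  · rw [integrableOn_image_iff_integrableOn_abs_deriv_smul measurableSet_Ioi hσdW hinj]
    exact hint.congr_fun (fun t ht => (key t ht).symm) measurableSet_Ioi
  · rw [integral_image_eq_integral_abs_deriv_smul measurableSet_Ioi hσdW hinj]
    exact setIntegral_congr_fun measurableSet_Ioi key
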